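/- Let φ : 𝔻 → 𝔻 be holomorphic and r ∈ ℕ. There exists a constant C > 0 (depending only on φ and r) such that for all arcs I ⊆ 𝕋 and all n ≥ 1, (1/|I|)·∫_{S(I)} |φ(z)|^n·(1−|φ(z)|)^r dm(z) ≤ C/n^{r+1}. -/

import Mathlib

open Metric MeasureTheory

open scoped ENNReal

/-- The Carleson box `S(I)` of the arc `I ⊆ 𝕋` with midpoint `exp(iθ₀)` and arclength `ℓ`:
`S(I) = { z = r e^{iθ} ∈ 𝔻 : e^{iθ} ∈ I, 1−r ≤ |I| }`. -/
def carlesonBox (θ₀ ℓ : ℝ) : Set ℂ :=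
  {z : ℂ | z ∈ ball (0 : ℂ) 1 ∧ 1 - ‖z‖ ≤ ℓ ∧
    ∃ θ : ℝ, |θ - θ₀| ≤ ℓ / 2 ∧ z = (‖z‖ : ℂ) * Complex.exp (θ * Complex.I)}

section Aux


open Real Set

open scoped ENNReal

lemma keyquad (a s u x : ℝ) (ha : 0 ≤ a) (ha1 : a < 1) (hs : 0 ≤ s) (hs1 : s < 1)
    (hu : 0 ≤ u) (hx : x ≤ a*u)
    (h : u^2 - 2*x + a^2 ≤ s^2*(1 - 2*x + a^2*u^2)) :
    u ≤ 1 - (1-a)/2*(1-s) := by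
  have has : a*s < 1 := by nlinarith
  have hs2 : (0:ℝ) ≤ 1 - s^2 := by nlinarith
  have hF : ((1+a*s)*u - (a+s)) * ((1-a*s)*u + (s-a)) ≤ 0 := by
    nlinarith [mul_nonneg (sub_nonneg.2 hx) hs2]
  by_contra hc
  push_neg at hc
  have f1 : 0 < (1+a*s)*u - (a+s) := by
    nlinarith [mul_pos (mul_pos (sub_pos.2 ha1) (sub_pos.2 hs1)) (sub_pos.2 has)]
  have f2 : 0 < (1-a*s)*u + (s-a) := by
    nlinarith [mul_pos (sub_pos.2 ha1) (sub_pos.2 has), mul_nonneg hs (sub_pos.2 ha1).le,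
      mul_nonneg (mul_nonneg ha hs) (sub_pos.2 has).le]
  nlinarith [mul_pos f1 f2]

lemma schwarzPick (φ : ℂ → ℂ) (hd : DifferentiableOn ℂ φ (ball 0 1))
    (hm : Set.MapsTo φ (ball 0 1) (ball 0 1)) {z : ℂ} (hz : z ∈ ball (0:ℂ) 1) :
    ‖φ z‖ ≤ 1 - (1 - ‖φ 0‖)/2 * (1 - ‖z‖) := by
  set b := φ 0 with hb
  have hb1 : ‖b‖ < 1 := by
    have := hm (mem_ball_self one_pos); rwa [mem_ball_zero_iff] at this
  set M : ℂ → ℂ := fun w => (w - b)/(1 - (starRingEnd ℂ) b * w) with hM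
  have hden : ∀ w : ℂ, ‖w‖ < 1 → 1 - (starRingEnd ℂ) b * w ≠ 0 := by
    intro w hw h0
    have habs : ‖(starRingEnd ℂ) b * w‖ < 1 := by
      rw [norm_mul, Complex.norm_conj]
      calc ‖b‖ * ‖w‖ ≤ 1 * ‖w‖ :=
            mul_le_mul_of_nonneg_right hb1.le (norm_nonneg _)
        _ < 1 := by rwa [one_mul]
    have h1 : (starRingEnd ℂ) b * w = 1 := by linear_combination -h0
    rw [h1] at habs; simp at habs
  have hsq : ∀ w : ℂ, Complex.normSq (1 - (starRingEnd ℂ) b * w) - Complex.normSq (w - b)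
      = (1 - Complex.normSq b) * (1 - Complex.normSq w) := by
    intro w
    simp only [Complex.normSq_apply, Complex.sub_re, Complex.sub_im, Complex.mul_re,
      Complex.mul_im, Complex.one_re, Complex.one_im, Complex.conj_re, Complex.conj_im]
    ring
  have hnormSq_lt : ∀ w : ℂ, ‖w‖ < 1 → Complex.normSq w < 1 := by
    intro w hw
    rw [← Complex.sq_norm]; nlinarith [norm_nonneg w]
  have hMm : Set.MapsTo M (ball 0 1) (ball 0 1) := by
    intro w hw
    rw [mem_ball_zero_iff] at hw ⊢
    have hpos : 0 < ‖1 - (starRingEnd ℂ) b * w‖ := norm_pos_iff.mpr (hden w hw)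
    show ‖(w - b)/(1 - (starRingEnd ℂ) b * w)‖ < 1
    rw [norm_div, div_lt_one hpos]
    rw [Complex.norm_def, Complex.norm_def]
    apply Real.sqrt_lt_sqrt (Complex.normSq_nonneg _)
    have := hsq w
    nlinarith [hnormSq_lt w hw, hnormSq_lt b hb1]
  have hMd : DifferentiableOn ℂ M (ball 0 1) := by
    apply DifferentiableOn.div
    · exact (differentiable_id.sub_const b).differentiableOn
    · exact ((differentiable_const (1:ℂ)).sub ((differentiable_const _).mul
        differentiable_id)).differentiableOn
    · intro w hw
      exact hden w (by rwa [mem_ball_zero_iff] at hw)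
  have h0 : (M ∘ φ) 0 = 0 := by
    simp only [Function.comp_apply, hM, ← hb, sub_self, zero_div]
  have hz' : ‖z‖ < 1 := by rwa [mem_ball_zero_iff] at hz
  have hS : ‖(M ∘ φ) z‖ ≤ ‖z‖ :=
    Complex.norm_le_norm_of_mapsTo_ball (hMd.comp hd hm) ((hMm.comp hm).mono_right ball_subset_closedBall) h0 hz'
  set w := φ z with hw
  set s := ‖z‖ with hs
  set u := ‖w‖ with hu
  set a := ‖b‖ with ha
  set x := ((starRingEnd ℂ) b * w).re with hxx
  have hwb : ‖w‖ < 1 := by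
    have := hm hz; rwa [mem_ball_zero_iff] at this
  have hpos : 0 < ‖1 - (starRingEnd ℂ) b * w‖ := norm_pos_iff.mpr (hden w hwb)
  have h1 : ‖w - b‖ ≤ s * ‖1 - (starRingEnd ℂ) b * w‖ := by
    have : ‖(w - b)/(1 - (starRingEnd ℂ) b * w)‖ ≤ s := hS
    rwa [norm_div, div_le_iff₀ hpos] at this
  have h2 : Complex.normSq (w - b) ≤ s^2 * Complex.normSq (1 - (starRingEnd ℂ) b * w) := by
    rw [← Complex.sq_norm, ← Complex.sq_norm]
    calc ‖w - b‖^2 ≤ (s * ‖1 - (starRingEnd ℂ) b * w‖)^2 := by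
          apply pow_le_pow_left₀ (norm_nonneg _) h1
      _ = s^2 * ‖1 - (starRingEnd ℂ) b * w‖^2 := by ring
  have e1 : Complex.normSq (w - b) = u^2 - 2*x + a^2 := by
    rw [hu, ha, hxx]
    simp only [Complex.sq_norm]
    simp only [Complex.normSq_apply, Complex.sub_re, Complex.sub_im, Complex.mul_re,
      Complex.mul_im, Complex.conj_re, Complex.conj_im]
    ring
  have e2 : Complex.normSq (1 - (starRingEnd ℂ) b * w) = 1 - 2*x + a^2*u^2 := by
    rw [hu, ha, hxx]
    simp only [Complex.sq_norm]
    simp only [Complex.normSq_apply, Complex.sub_re, Complex.sub_im, Complex.mul_re,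
      Complex.mul_im, Complex.one_re, Complex.one_im, Complex.conj_re, Complex.conj_im]
    ring
  have hxau : x ≤ a * u := by
    calc x ≤ ‖(starRingEnd ℂ) b * w‖ := Complex.re_le_norm _
      _ = a * u := by rw [norm_mul, Complex.norm_conj]
  exact keyquad a s u x (norm_nonneg _) hb1 (norm_nonneg _) hz'
    (norm_nonneg _) hxau (by rw [e1, e2] at h2; exact h2)

lemma pow_mul_one_sub_le (t : ℝ) (ht : 0 ≤ t) (ht1 : t ≤ 1) (q : ℕ) :
    t^q * (1-t) ≤ 1/(q+1) := by
  have hgeom : (1-t) * ∑ i ∈ Finset.range (q+1), t^i = 1 - t^(q+1) := by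
    have := geom_sum_mul t (q+1)
    linear_combination -this
  have hsum : ((q:ℝ)+1) * t^q ≤ ∑ i ∈ Finset.range (q+1), t^i := by
    calc ((q:ℝ)+1) * t^q = ∑ _i ∈ Finset.range (q+1), t^q := by
          rw [Finset.sum_const, Finset.card_range]; push_cast; ring
      _ ≤ ∑ i ∈ Finset.range (q+1), t^i := by
          apply Finset.sum_le_sum
          intro i hi
          exact pow_le_pow_of_le_one ht ht1 (Nat.lt_succ_iff.1 (Finset.mem_range.1 hi))
  have hq : (0:ℝ) < (q:ℝ)+1 := by positivity
  rw [le_div_iff₀ hq]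
  have h1 : (1-t) * (((q:ℝ)+1) * t^q) ≤ (1-t) * ∑ i ∈ Finset.range (q+1), t^i :=
    mul_le_mul_of_nonneg_left hsum (by linarith)
  have h2 : (1:ℝ) - t^(q+1) ≤ 1 := by nlinarith [pow_nonneg ht (q+1)]
  nlinarith [h1, hgeom, h2]

lemma polybound (r n : ℕ) (hn : 1 ≤ n) (t : ℝ) (ht : 0 ≤ t) (ht1 : t ≤ 1) :
    t^(n - n/2) * (1-t)^r ≤ (2*r:ℝ)^r / (n:ℝ)^r := by
  set k := n - n/2 with hk
  have hk1 : 1 ≤ k := by omega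
  have h2k : n ≤ 2*k := by omega
  rcases Nat.eq_zero_or_pos r with hr | hr
  · subst hr
    simpa using pow_le_one₀ ht ht1
  · set q := k / r with hq
    have h1 : r * q + k % r = k := Nat.div_add_mod k r
    have h2 : k % r < r := Nat.mod_lt k hr
    have hqr : k + 1 ≤ r*(q+1) := by
      rw [Nat.mul_add, Nat.mul_one]; omega
    have s1 : t^k * (1-t)^r ≤ (t^q * (1-t))^r := by
      rw [mul_pow, ← pow_mul]
      apply mul_le_mul_of_nonneg_right _ (pow_nonneg (by linarith) r)
      exact pow_le_pow_of_le_one ht ht1 (Nat.div_mul_le_self k r)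
    have s2 : (t^q * (1-t))^r ≤ (1/((q:ℝ)+1))^r :=
      pow_le_pow_left₀ (mul_nonneg (pow_nonneg ht q) (by linarith))
        (pow_mul_one_sub_le t ht ht1 q) r
    have s3 : (1/((q:ℝ)+1)) ≤ (2*r:ℝ)/(n:ℝ) := by
      have hn0 : (0:ℝ) < (n:ℝ) := by exact_mod_cast hn
      rw [div_le_div_iff₀ (by positivity) hn0]
      have hcast : (n:ℝ) ≤ 2*((r:ℝ)*((q:ℝ)+1)) := by
        have h3 : n ≤ 2*(r*(q+1)) := by omega
        exact_mod_cast h3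
      nlinarith
    calc t^k * (1-t)^r ≤ (1/((q:ℝ)+1))^r := s1.trans s2
      _ ≤ ((2*r:ℝ)/(n:ℝ))^r := pow_le_pow_left₀ (by positivity) s3 r
      _ = (2*r:ℝ)^r / (n:ℝ)^r := div_pow _ _ r

lemma lintegral_polar_real (g : ℝ × ℝ → ℝ≥0∞) :
    ∫⁻ p, g p = ∫⁻ p in polarCoord.target, ENNReal.ofReal p.1 * g (polarCoord.symm p) := by
  set B : ℝ × ℝ → ℝ × ℝ →L[ℝ] ℝ × ℝ := fun p =>
    LinearMap.toContinuousLinearMap (Matrix.toLin (Module.Basis.finTwoProd ℝ) (Module.Basis.finTwoProd ℝ)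
      !![Real.cos p.2, -p.1 * Real.sin p.2; Real.sin p.2, p.1 * Real.cos p.2]) with hB
  have A : ∀ p ∈ polarCoord.target, HasFDerivWithinAt polarCoord.symm (B p) polarCoord.target p :=
    fun p _ => (hasFDerivAt_polarCoord_symm p).hasFDerivWithinAt
  have B_det : ∀ p, (B p).det = p.1 := by
    intro p
    conv_rhs => rw [← one_mul p.1, ← cos_sq_add_sin_sq p.2]
    simp only [hB, neg_mul, LinearMap.det_toContinuousLinearMap, LinearMap.det_toLin,
      Matrix.det_fin_two_of, sub_neg_eq_add]
    ring
  calc ∫⁻ p, g p = ∫⁻ p in polarCoord.source, g p := by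
        rw [← setLIntegral_univ]
        exact setLIntegral_congr polarCoord_source_ae_eq_univ.symm
    _ = ∫⁻ p in polarCoord.symm '' polarCoord.target, g p := by
        rw [OpenPartialHomeomorph.symm_image_target_eq_source]
    _ = ∫⁻ p in polarCoord.target, ENNReal.ofReal |(B p).det| * g (polarCoord.symm p) :=
        lintegral_image_eq_lintegral_abs_det_fderiv_mul volume
          polarCoord.open_target.measurableSet A polarCoord.symm.injOn g
    _ = ∫⁻ p in polarCoord.target, ENNReal.ofReal p.1 * g (polarCoord.symm p) := by
        apply setLIntegral_congr_fun polarCoord.open_target.measurableSet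
        intro p hp
        dsimp only
        rw [B_det, abs_of_pos hp.1]

lemma lintegral_polar_complex (f : ℂ → ℝ≥0∞) (hf : Measurable f) :
    ∫⁻ z, f z = ∫⁻ p in polarCoord.target, ENNReal.ofReal p.1 * f (Complex.polarCoord.symm p) := by
  rw [← (Complex.volume_preserving_equiv_real_prod.symm).lintegral_comp hf]
  rw [lintegral_polar_real (fun p => f (Complex.measurableEquivRealProd.symm p))]
  rfl

lemma radial_int (c : ℝ) (hc0 : 0 < c) (hc1 : c ≤ 1) (m : ℕ) :
    ∫ x in Set.Icc (0:ℝ) 1, ((1-c) + c*x)^m ≤ 1/(c*((m:ℝ)+1)) := by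
  have h1 : ∫ x in Set.Icc (0:ℝ) 1, ((1-c) + c*x)^m = ∫ x in (0:ℝ)..1, ((1-c) + c*x)^m := by
    rw [MeasureTheory.integral_Icc_eq_integral_Ioc, ← intervalIntegral.integral_of_le zero_le_one]
  have h2 : ∫ x in (0:ℝ)..1, ((1-c) + c*x)^m = c⁻¹ * ((1 - (1-c)^(m+1))/((m:ℝ)+1)) := by
    have : ∀ x : ℝ, ((1-c) + c*x)^m = (fun y => y^m) (c*x + (1-c)) := by
      intro x; simp only []; ring_nf
    rw [intervalIntegral.integral_congr (fun x _ => this x)]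
    rw [intervalIntegral.integral_comp_mul_add (fun y => y^m) hc0.ne' (1-c)]
    rw [integral_pow]
    simp only [mul_zero, zero_add, mul_one, smul_eq_mul]
    ring_nf
  rw [h1, h2]
  have hm1 : (0:ℝ) < (m:ℝ)+1 := by positivity
  have h3 : (0:ℝ) ≤ (1-c)^(m+1) := pow_nonneg (by linarith) _
  have h4 : c⁻¹ * ((1 - (1-c)^(m+1))/((m:ℝ)+1)) ≤ c⁻¹ * (1/((m:ℝ)+1)) := by
    gcongr
    linarith
  calc c⁻¹ * ((1 - (1-c)^(m+1))/((m:ℝ)+1)) ≤ c⁻¹ * (1/((m:ℝ)+1)) := h4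
    _ = 1/(c*((m:ℝ)+1)) := by field_simp

lemma angular (θ₀ ℓ ψ : ℝ) (hl : 0 < ℓ) (hl2 : ℓ ≤ 2*π) (hψ1 : -π < ψ) (hψ2 : ψ < π)
    (k : ℤ) (h : |ψ + 2*π*k - θ₀| ≤ ℓ/2) :
    ψ ∈ Set.Icc (θ₀ - 2*π*⌊θ₀/(2*π)⌋ - ℓ/2) (θ₀ - 2*π*⌊θ₀/(2*π)⌋ + ℓ/2) ∪
      Set.Icc (θ₀ - 2*π*⌊θ₀/(2*π)⌋ - 2*π - ℓ/2) (θ₀ - 2*π*⌊θ₀/(2*π)⌋ - 2*π + ℓ/2) := by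
  have hπ := Real.pi_pos
  rw [abs_le] at h
  set x := θ₀/(2*π) with hx
  have hθ₀ : θ₀ = 2*π*x := by rw [hx]; field_simp
  have hb1 : x < (k:ℝ) + 1 := by nlinarith
  have hb2 : (k:ℝ) - 1 < x := by nlinarith
  have hk1 : ⌊x⌋ ≤ k := by
    have : ⌊x⌋ < k + 1 := Int.floor_lt.2 (by push_cast; linarith)
    omega
  have hk2 : k ≤ ⌊x⌋ + 1 := by
    have : k ≤ ⌊x + 1⌋ := Int.le_floor.2 (by push_cast; linarith)
    have h4 : ⌊x + (1:ℤ)⌋ = ⌊x⌋ + 1 := Int.floor_add_intCast x 1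
    push_cast at h4
    omega
  rcases (by omega : k = ⌊x⌋ ∨ k = ⌊x⌋ + 1) with hk | hk
  · left
    subst hk
    rw [Set.mem_Icc]
    exact ⟨by linarith [h.1, h.2], by linarith [h.1, h.2]⟩
  · right
    rw [hk] at h
    push_cast at h
    rw [Set.mem_Icc]
    exact ⟨by linarith [h.1, h.2], by linarith [h.1, h.2]⟩

end Aux

set_option maxHeartbeats 1000000 in
/-- for `φ : 𝔻 → 𝔻` holomorphic and `r ∈ ℕ` there is `C > 0` (depending on `φ, r`)
such that for all arcs `I ⊆ 𝕋` and all `n ≥ 1`,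
`(1/|I|)∫_{S(I)} |φ(z)|ⁿ (1−|φ(z)|)ʳ dm(z) ≤ C/n^{r+1}`, with `m = π⁻¹·(area measure)`. -/
theorem stmt4 (φ : ℂ → ℂ) (hd : DifferentiableOn ℂ φ (ball 0 1))
    (hm : Set.MapsTo φ (ball 0 1) (ball 0 1)) (r : ℕ) :
    ∃ C > 0, ∀ θ₀ ℓ : ℝ, 0 < ℓ → ℓ ≤ 2 * Real.pi → ∀ n : ℕ, 1 ≤ n →
      (1 / ℓ) * ((Real.pi)⁻¹ *
          ∫ z in carlesonBox θ₀ ℓ,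
            ‖φ z‖ ^ n * (1 - ‖φ z‖) ^ r ∂volume)
        ≤ C / n ^ (r + 1) := by
  have hπ := Real.pi_pos
  set a := ‖φ 0‖ with ha
  have ha1 : a < 1 := by
    have := hm (mem_ball_self one_pos); rwa [mem_ball_zero_iff] at this
  have ha0 : 0 ≤ a := norm_nonneg _
  set c := (1 - a)/2 with hc
  have hc0 : 0 < c := by rw [hc]; linarith
  have hc1 : c ≤ 1 := by rw [hc]; linarith
  have hXpos : (0:ℝ) < (2*r:ℝ)^r := by
    rcases Nat.eq_zero_or_pos r with h|h
    · subst h; simp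
    · have : (0:ℝ) < (r:ℝ) := by exact_mod_cast h
      apply pow_pos; linarith
  refine ⟨4*(2*r:ℝ)^r/(Real.pi*c), by positivity, ?_⟩
  intro θ₀ ℓ hl hl2 n hn
  have hn0 : (0:ℝ) < (n:ℝ) := by exact_mod_cast hn
  set mm := n/2 with hmm
  set B := (2*r:ℝ)^r/(n:ℝ)^r with hB
  have hBnn : 0 ≤ B := by positivity
  set G : ℂ → ℝ := fun z => B * ((1-c) + c*‖z‖)^mm with hG
  have hbase : ∀ z : ℂ, 0 ≤ (1-c) + c*‖z‖ := by
    intro z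
    have := norm_nonneg z
    nlinarith
  have hGnn : ∀ z, 0 ≤ G z := fun z => mul_nonneg hBnn (pow_nonneg (hbase z) mm)
  have hGcont : Continuous G :=
    continuous_const.mul ((continuous_const.add
      (continuous_const.mul continuous_norm)).pow mm)
  have hGint : IntegrableOn G (closedBall (0:ℂ) 1) :=
    hGcont.continuousOn.integrableOn_compact (isCompact_closedBall 0 1)
  -- pointwise bound on the ball
  have hFG : ∀ z ∈ ball (0:ℂ) 1,
      ‖φ z‖ ^ n * (1 - ‖φ z‖) ^ r ≤ G z := by
    intro z hz
    have hu1 : ‖φ z‖ < 1 := by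
      have := hm hz; rwa [mem_ball_zero_iff] at this
    have hu0 : 0 ≤ ‖φ z‖ := norm_nonneg _
    have hsp : ‖φ z‖ ≤ (1-c) + c*‖z‖ := by
      have h1 := schwarzPick φ hd hm hz
      have h2 : 1 - (1 - a)/2 * (1 - ‖z‖) = (1-c) + c*‖z‖ := by
        rw [hc]; ring
      rw [← h2]; exact h1
    have hnk : ‖φ z‖ ^ n =
        ‖φ z‖ ^ (n - n/2) * ‖φ z‖ ^ mm := by
      rw [← pow_add]
      congr 1
      omega
    calc ‖φ z‖ ^ n * (1 - ‖φ z‖) ^ r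
        = (‖φ z‖ ^ (n - n/2) * (1 - ‖φ z‖) ^ r)
            * ‖φ z‖ ^ mm := by rw [hnk]; ring
      _ ≤ (2*r:ℝ)^r / (n:ℝ)^r * ‖φ z‖ ^ mm :=
            mul_le_mul_of_nonneg_right (polybound r n hn _ hu0 hu1.le) (pow_nonneg hu0 _)
      _ ≤ B * ((1-c) + c*‖z‖)^mm := by
            rw [hB]
            exact mul_le_mul_of_nonneg_left (pow_le_pow_left₀ hu0 hsp _) (by positivity)
      _ = G z := rfl
  -- the measurable enlargement T
  set T : Set ℂ := {z : ℂ | ‖z‖ < 1 ∧ 1 - ‖z‖ ≤ ℓ ∧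
      (z = 0 ∨ ∃ k : ℤ, |Complex.arg z + 2*Real.pi*k - θ₀| ≤ ℓ/2)} with hT
  have habs_m : Measurable (fun z : ℂ => ‖z‖) := continuous_norm.measurable
  have hTm : MeasurableSet T := by
    have hTeq : T = {z : ℂ | ‖z‖ < 1} ∩ ({z : ℂ | 1 - ‖z‖ ≤ ℓ} ∩
        ({(0:ℂ)} ∪ ⋃ k : ℤ, {z : ℂ | |Complex.arg z + 2*Real.pi*k - θ₀| ≤ ℓ/2})) := by
      ext z
      simp only [hT, Set.mem_setOf_eq, Set.mem_inter_iff, Set.mem_union,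
        Set.mem_singleton_iff, Set.mem_iUnion]
    rw [hTeq]
    refine (measurableSet_lt habs_m measurable_const).inter ?_
    refine (measurableSet_le (measurable_const.sub habs_m) measurable_const).inter ?_
    refine (measurableSet_singleton 0).union ?_
    refine MeasurableSet.iUnion fun k => ?_
    exact measurableSet_le (((Complex.measurable_arg.add_const _).sub_const _).abs)
      measurable_const
  have hST : carlesonBox θ₀ ℓ ⊆ T := by
    rintro z ⟨hz1, hz2, θ, hθ, hzeq⟩
    have hz1' : ‖z‖ < 1 := by rwa [mem_ball_zero_iff] at hz1
    refine ⟨hz1', hz2, ?_⟩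
    rcases eq_or_ne z 0 with h0 | h0
    · exact Or.inl h0
    · right
      have habs0 : (0:ℝ) < ‖z‖ := norm_pos_iff.mpr h0
      have harg : Complex.arg z = toIocMod Real.two_pi_pos (-Real.pi) θ := by
        conv_lhs => rw [hzeq, Complex.exp_mul_I]
        exact Complex.arg_mul_cos_add_sin_mul_I_eq_toIocMod habs0 θ
      refine ⟨toIocDiv Real.two_pi_pos (-Real.pi) θ, ?_⟩
      have hdiv := self_sub_toIocMod Real.two_pi_pos (-Real.pi) θ
      rw [zsmul_eq_mul] at hdiv
      have e : Complex.arg z + 2*Real.pi*(toIocDiv Real.two_pi_pos (-Real.pi) θ) - θ₀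
          = θ - θ₀ := by
        rw [harg]; linarith [hdiv]
      rw [e]; exact hθ
  -- chain of integral inequalities
  set F : ℂ → ℝ := fun z => ‖φ z‖ ^ n * (1 - ‖φ z‖) ^ r with hF
  have hSball : carlesonBox θ₀ ℓ ⊆ ball (0:ℂ) 1 := fun z hz => hz.1
  have hTball : T ⊆ closedBall (0:ℂ) 1 := by
    intro z hz; rw [mem_closedBall_zero_iff]; exact hz.1.le
  have haeS : ∀ᵐ z ∂(volume.restrict (carlesonBox θ₀ ℓ)), z ∈ ball (0:ℂ) 1 :=
    Filter.Eventually.filter_mono (ae_mono (Measure.restrict_mono hSball le_rfl))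
      (ae_restrict_mem measurableSet_ball)
  have step1 : ∫ z in carlesonBox θ₀ ℓ, F z ≤ ∫ z in carlesonBox θ₀ ℓ, G z := by
    apply integral_mono_of_nonneg
    · filter_upwards [haeS] with z hz
      have hu1 : ‖φ z‖ < 1 := by
        have := hm hz; rwa [mem_ball_zero_iff] at this
      exact mul_nonneg (pow_nonneg (norm_nonneg _) _)
        (pow_nonneg (by linarith) _)
    · exact hGint.mono_set (hSball.trans ball_subset_closedBall)
    · filter_upwards [haeS] with z hz
      exact hFG z hz
  have step2 : ∫ z in carlesonBox θ₀ ℓ, G z ≤ ∫ z in T, G z :=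
    setIntegral_mono_set (hGint.mono_set hTball) (ae_of_all _ hGnn)
      (HasSubset.Subset.eventuallyLE hST)
  have step3 : ∫ z in T, G z = (∫⁻ z in T, ENNReal.ofReal (G z)).toReal :=
    integral_eq_lintegral_of_nonneg_ae (ae_of_all _ hGnn) hGcont.aestronglyMeasurable
  -- angular set
  set U : Set ℝ := Set.Icc (θ₀ - 2*Real.pi*⌊θ₀/(2*Real.pi)⌋ - ℓ/2)
      (θ₀ - 2*Real.pi*⌊θ₀/(2*Real.pi)⌋ + ℓ/2) ∪
      Set.Icc (θ₀ - 2*Real.pi*⌊θ₀/(2*Real.pi)⌋ - 2*Real.pi - ℓ/2)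
        (θ₀ - 2*Real.pi*⌊θ₀/(2*Real.pi)⌋ - 2*Real.pi + ℓ/2) with hU
  have hUm : MeasurableSet U := measurableSet_Icc.union measurableSet_Icc
  have hUvol : volume U ≤ ENNReal.ofReal (2*ℓ) := by
    refine (measure_union_le _ _).trans ?_
    rw [Real.volume_Icc, Real.volume_Icc, ← ENNReal.ofReal_add (by linarith) (by linarith)]
    apply ENNReal.ofReal_le_ofReal
    ring_nf
    nlinarith [hl]
  set g1 : ℝ → ℝ≥0∞ := fun x => (Set.Icc (0:ℝ) 1).indicator
      (fun x => ENNReal.ofReal (B * ((1-c) + c*x)^mm)) x with hg1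
  have hg1m : Measurable g1 := by
    apply Measurable.indicator _ measurableSet_Icc
    apply ENNReal.measurable_ofReal.comp
    exact (measurable_const.mul
      ((measurable_const.add (measurable_const.mul measurable_id)).pow_const mm))
  have hUindm : Measurable (fun y : ℝ => U.indicator (fun _ => (1:ℝ≥0∞)) y) :=
    measurable_const.indicator hUm
  have hind_meas : Measurable (fun z : ℂ => T.indicator (fun z => ENNReal.ofReal (G z)) z) :=
    (ENNReal.measurable_ofReal.comp hGcont.measurable).indicator hTm
  have e4 : ∫⁻ z in T, ENNReal.ofReal (G z) =
      ∫⁻ p in polarCoord.target, ENNReal.ofReal p.1 *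
        T.indicator (fun z => ENNReal.ofReal (G z)) (Complex.polarCoord.symm p) := by
    rw [← lintegral_indicator hTm]
    exact lintegral_polar_complex _ hind_meas
  have e5 : ∀ p ∈ polarCoord.target, ENNReal.ofReal p.1 *
        T.indicator (fun z => ENNReal.ofReal (G z)) (Complex.polarCoord.symm p)
      ≤ g1 p.1 * U.indicator (fun _ => (1:ℝ≥0∞)) p.2 := by
    intro p hp
    rw [polarCoord_target, Set.mem_prod] at hp
    obtain ⟨hp1, hp2⟩ := hp
    rw [Set.mem_Ioi] at hp1
    rw [Set.mem_Ioo] at hp2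
    by_cases hmem : Complex.polarCoord.symm p ∈ T
    · rw [Set.indicator_of_mem hmem]
      have habsp : ‖Complex.polarCoord.symm p‖ = p.1 := by
        rw [Complex.norm_polarCoord_symm, abs_of_pos hp1]
      obtain ⟨ht1, ht2, ht3⟩ := hmem
      rw [habsp] at ht1
      have hz0 : Complex.polarCoord.symm p ≠ 0 := by
        intro h0
        rw [h0] at habsp
        simp at habsp
        linarith [habsp]
      have hargp : Complex.arg (Complex.polarCoord.symm p) = p.2 := by
        rw [Complex.polarCoord_symm_apply]
        rw [show ((p.1:ℂ) * (Real.cos p.2 + Real.sin p.2 * Complex.I)) =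
          (p.1:ℂ) * (Complex.cos p.2 + Complex.sin p.2 * Complex.I) by
            rw [Complex.ofReal_cos, Complex.ofReal_sin]]
        rw [Complex.arg_mul_cos_add_sin_mul_I hp1 (Set.mem_Ioc.2 ⟨hp2.1, hp2.2.le⟩)]
      rcases ht3 with h0 | ⟨k, hk⟩
      · exact absurd h0 hz0
      rw [hargp] at hk
      have hp2U : p.2 ∈ U := by
        rw [hU]
        exact angular θ₀ ℓ p.2 hl hl2 hp2.1 hp2.2 k hk
      rw [Set.indicator_of_mem hp2U]
      have hGp : G (Complex.polarCoord.symm p) = B * ((1-c) + c*p.1)^mm := by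
        rw [hG]; simp only []; rw [habsp]
      rw [hGp]
      have hg1p : g1 p.1 = ENNReal.ofReal (B * ((1-c)+c*p.1)^mm) :=
        Set.indicator_of_mem (Set.mem_Icc.2 ⟨hp1.le, ht1.le⟩) _
      rw [hg1p]
      calc ENNReal.ofReal p.1 * ENNReal.ofReal (B * ((1-c)+c*p.1)^mm)
          ≤ 1 * ENNReal.ofReal (B * ((1-c)+c*p.1)^mm) :=
            mul_le_mul_left (ENNReal.ofReal_le_one.2 ht1.le) _
        _ = ENNReal.ofReal (B * ((1-c)+c*p.1)^mm) * 1 := by ring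
    · rw [Set.indicator_of_notMem hmem, mul_zero]
      exact zero_le
  have step5 : ∫⁻ z in T, ENNReal.ofReal (G z) ≤
      (∫⁻ x, g1 x) * ∫⁻ y, U.indicator (fun _ => (1:ℝ≥0∞)) y := by
    rw [e4]
    calc ∫⁻ p in polarCoord.target, ENNReal.ofReal p.1 *
          T.indicator (fun z => ENNReal.ofReal (G z)) (Complex.polarCoord.symm p)
        ≤ ∫⁻ p in polarCoord.target, g1 p.1 * U.indicator (fun _ => (1:ℝ≥0∞)) p.2 :=
          setLIntegral_mono ((hg1m.comp measurable_fst).mul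
            (hUindm.comp measurable_snd)) e5
      _ ≤ ∫⁻ p : ℝ × ℝ, g1 p.1 * U.indicator (fun _ => (1:ℝ≥0∞)) p.2 :=
          setLIntegral_le_lintegral _ _
      _ = (∫⁻ x, g1 x) * ∫⁻ y, U.indicator (fun _ => (1:ℝ≥0∞)) y := by
          rw [show (volume : Measure (ℝ × ℝ)) = (volume : Measure ℝ).prod volume from rfl]
          exact lintegral_prod_mul hg1m.aemeasurable hUindm.aemeasurable
  have hg1int : ∫⁻ x, g1 x ≤ ENNReal.ofReal (B * (1/(c*((mm:ℝ)+1)))) := by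
    rw [hg1, lintegral_indicator measurableSet_Icc]
    have hint : IntegrableOn (fun x : ℝ => B * ((1-c) + c*x)^mm) (Set.Icc (0:ℝ) 1) := by
      apply ContinuousOn.integrableOn_compact isCompact_Icc
      fun_prop
    have hnnx : 0 ≤ᵐ[volume.restrict (Set.Icc (0:ℝ) 1)] fun x : ℝ => B * ((1-c) + c*x)^mm := by
      filter_upwards [ae_restrict_mem measurableSet_Icc] with x hx
      have : 0 ≤ (1-c) + c*x := by
        rcases hx with ⟨hx0, hx1⟩
        nlinarith
      exact mul_nonneg hBnn (pow_nonneg this mm)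
    rw [← ofReal_integral_eq_lintegral_ofReal hint hnnx]
    apply ENNReal.ofReal_le_ofReal
    rw [integral_const_mul]
    exact mul_le_mul_of_nonneg_left (radial_int c hc0 hc1 mm) hBnn
  have hItop : ENNReal.ofReal (B * (1/(c*((mm:ℝ)+1)))) * ENNReal.ofReal (2*ℓ) ≠ ⊤ :=
    ENNReal.mul_ne_top ENNReal.ofReal_ne_top ENNReal.ofReal_ne_top
  have step6 : (∫⁻ z in T, ENNReal.ofReal (G z)).toReal ≤ B * (1/(c*((mm:ℝ)+1))) * (2*ℓ) := by
    have hle : ∫⁻ z in T, ENNReal.ofReal (G z) ≤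
        ENNReal.ofReal (B * (1/(c*((mm:ℝ)+1)))) * ENNReal.ofReal (2*ℓ) := by
      refine step5.trans ?_
      have hUone : ∫⁻ y, U.indicator (fun _ => (1:ℝ≥0∞)) y = volume U :=
        lintegral_indicator_one hUm
      rw [hUone]
      exact mul_le_mul' hg1int hUvol
    refine (ENNReal.toReal_mono hItop hle).trans ?_
    rw [← ENNReal.ofReal_mul (by positivity)]
    rw [ENNReal.toReal_ofReal (by positivity)]
  have hI : ∫ z in carlesonBox θ₀ ℓ, F z ≤ B * (1/(c*((mm:ℝ)+1))) * (2*ℓ) := by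
    calc ∫ z in carlesonBox θ₀ ℓ, F z ≤ ∫ z in T, G z := step1.trans step2
      _ = (∫⁻ z in T, ENNReal.ofReal (G z)).toReal := step3
      _ ≤ _ := step6
  -- final arithmetic
  have hmm2 : (n:ℝ) ≤ 2*((mm:ℝ)+1) := by
    have h2 : n ≤ 2*(mm+1) := by omega
    exact_mod_cast h2
  have hN0 : (0:ℝ) < (n:ℝ)^r := by positivity
  have hM0 : (0:ℝ) < (mm:ℝ)+1 := by positivity
  have lhs_le : (1 / ℓ) * ((Real.pi)⁻¹ * ∫ z in carlesonBox θ₀ ℓ, F z)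
      ≤ (1 / ℓ) * ((Real.pi)⁻¹ * (B * (1/(c*((mm:ℝ)+1))) * (2*ℓ))) := by
    apply mul_le_mul_of_nonneg_left _ (by positivity)
    exact mul_le_mul_of_nonneg_left hI (by positivity)
  refine lhs_le.trans ?_
  have heq : (1 / ℓ) * ((Real.pi)⁻¹ * (B * (1/(c*((mm:ℝ)+1))) * (2*ℓ)))
      = (2*r:ℝ)^r * (2/(Real.pi*c*((mm:ℝ)+1)*(n:ℝ)^r)) := by
    rw [hB]
    field_simp
  have heq2 : (4*(2*r:ℝ)^r/(Real.pi*c)) / (n:ℝ)^(r+1)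
      = (2*r:ℝ)^r * (4/(Real.pi*c*(n:ℝ)^r*(n:ℝ))) := by
    rw [pow_succ]
    field_simp
  rw [heq]
  show _ ≤ (4*(2*r:ℝ)^r/(Real.pi*c)) / ((n:ℕ):ℝ)^(r+1)
  rw [heq2]
  apply mul_le_mul_of_nonneg_left _ hXpos.le
  rw [div_le_div_iff₀ (by positivity) (by positivity)]
  have hP : (0:ℝ) < Real.pi*c*(n:ℝ)^r := by positivity
  nlinarith [mul_le_mul_of_nonneg_left hmm2 hP.le]
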